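/- Let X, Y be Polish spaces, c continuous and bounded, μ ∈ P(X), ν ∈ P(Y). Suppose f ∈ S_c(μ,ν) is a Kantorovich potential that is constant μ-almost surely and continuous on supp(μ). Then μ is a ν-projected measure: any optimal transport plan π ∈ Π(μ,ν) satisfies c(x,y) = inf_{x' ∈ supp(μ)} c(x',y) for all (x,y) ∈ supp(π). -/

import Mathlib

open MeasureTheory
open scoped ENNReal

/-- Topological support of a measure: points all of whose open neighborhoods
have positive measure. -/
def msupport {X : Type*} [TopologicalSpace X] [MeasurableSpace X]
    (μ : Measure X) : Set X :=
  {x | ∀ U : Set X, IsOpen U → x ∈ U → μ U ≠ 0}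

/-- `π` is a coupling of `μ` and `ν`. -/
def IsCoupling {X Y : Type*} [MeasurableSpace X] [MeasurableSpace Y]
    (π : Measure (X × Y)) (μ : Measure X) (ν : Measure Y) : Prop :=
  IsProbabilityMeasure π ∧ π.map Prod.fst = μ ∧ π.map Prod.snd = ν

/-- Optimal transport cost (in `ℝ≥0∞`). -/
noncomputable def OTCost {X Y : Type*} [MeasurableSpace X] [MeasurableSpace Y]
    (c : X → Y → ℝ) (μ : Measure X) (ν : Measure Y) : ℝ≥0∞ :=
  ⨅ (π : Measure (X × Y)) (_ : IsCoupling π μ ν),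
    ∫⁻ p, ENNReal.ofReal (c p.1 p.2) ∂π

/-- Optimal transport cost (real-valued, for bounded costs). -/
noncomputable def OTr {X Y : Type*} [MeasurableSpace X] [MeasurableSpace Y]
    (c : X → Y → ℝ) (μ : Measure X) (ν : Measure Y) : ℝ :=
  sInf {r : ℝ | ∃ π : Measure (X × Y), IsCoupling π μ ν ∧ r = ∫ p, c p.1 p.2 ∂π}

section Helpers

variable {X : Type*} [TopologicalSpace X] [MeasurableSpace X] (μ : MeasureTheory.Measure X)

lemma msupport_compl_eq :
    (msupport μ)ᶜ = ⋃₀ {U : Set X | IsOpen U ∧ μ U = 0} := by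
  ext x
  simp only [Set.mem_compl_iff, msupport, Set.mem_setOf_eq, Set.mem_sUnion]
  push_neg
  constructor
  · rintro ⟨U, hU, hxU, hμU⟩
    exact ⟨U, ⟨hU, hμU⟩, hxU⟩
  · rintro ⟨U, ⟨hU, hμU⟩, hxU⟩
    exact ⟨U, hU, hxU, hμU⟩

lemma isClosed_msupport : IsClosed (msupport μ) := by
  rw [← isOpen_compl_iff, msupport_compl_eq]
  exact isOpen_sUnion fun U hU => hU.1

lemma measure_msupport_compl [SecondCountableTopology X] :
    μ (msupport μ)ᶜ = 0 := by
  have hsub : (msupport μ)ᶜ ⊆ ⋃ b ∈ {b ∈ TopologicalSpace.countableBasis X | μ b = 0}, b := by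
    intro x hx
    rw [msupport_compl_eq] at hx
    obtain ⟨U, ⟨hUopen, hUnull⟩, hxU⟩ := hx
    obtain ⟨b, hb, hxb, hbU⟩ :=
      (TopologicalSpace.isBasis_countableBasis X).exists_subset_of_mem_open hxU hUopen
    have : μ b = 0 := le_antisymm (hUnull ▸ measure_mono hbU) zero_le
    exact Set.mem_biUnion ⟨hb, this⟩ hxb
  refine le_antisymm ((measure_mono hsub).trans ?_) zero_le
  refine le_of_eq ((MeasureTheory.measure_biUnion_null_iff ?_).mpr fun b hb => hb.2)
  exact (TopologicalSpace.countable_countableBasis X).mono (Set.sep_subset _ _)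

end Helpers

theorem stmt14 {X Y : Type*} [Nonempty X] [Nonempty Y]
    [TopologicalSpace X] [PolishSpace X] [MeasurableSpace X] [BorelSpace X]
    [TopologicalSpace Y] [PolishSpace Y] [MeasurableSpace Y] [BorelSpace Y]
    (c : X → Y → ℝ) (hc : Continuous fun p : X × Y => c p.1 p.2)
    (hc0 : ∀ x y, 0 ≤ c x y) (C : ℝ) (hcC : ∀ x y, c x y ≤ C)
    (μ : Measure X) (ν : Measure Y)
    [IsProbabilityMeasure μ] [IsProbabilityMeasure ν]
    (f : X → ℝ) (fc : Y → ℝ)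
    (hconc : ∃ g : Y → ℝ, ∀ x ∈ msupport μ,
      f x = sInf ((fun y => c x y - g y) '' msupport ν))
    (hfc : ∀ y, fc y = sInf ((fun x => c x y - f x) '' msupport μ))
    (hopt : ∫ x, f x ∂μ + ∫ y, fc y ∂ν = OTr c μ ν)
    (hconst : ∃ a : ℝ, f =ᵐ[μ] fun _ => a)
    (hcont : ContinuousOn f (msupport μ)) :
    ∀ π : Measure (X × Y), IsCoupling π μ ν →
      (∫ p, c p.1 p.2 ∂π = OTr c μ ν) →
      ∀ p ∈ msupport π, c p.1 p.2 = sInf ((fun x' => c x' p.2) '' msupport μ) := by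
  intro π hπ hπopt p hp
  obtain ⟨a, hconsta⟩ := hconst
  obtain ⟨hπprob, hfst, hsnd⟩ := hπ
  haveI := hπprob
  -- support of μ has full measure and is closed
  have hμcompl : μ (msupport μ)ᶜ = 0 := measure_msupport_compl μ
  -- f equals a on the support of μ
  have hfa : ∀ x ∈ msupport μ, f x = a := by
    intro x hx
    by_contra hne
    have hε : 0 < |f x - a| := abs_pos.mpr (sub_ne_zero.mpr hne)
    have hball : f ⁻¹' Metric.ball (f x) |f x - a| ∈ nhdsWithin x (msupport μ) :=
      (hcont x hx) (Metric.ball_mem_nhds _ hε)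
    obtain ⟨U, hUopen, hxU, hUsub⟩ := mem_nhdsWithin.mp hball
    have hμU : μ U ≠ 0 := hx U hUopen hxU
    have hNa : μ {x | f x ≠ a} = 0 := by
      have := hconsta
      rw [Filter.EventuallyEq, MeasureTheory.ae_iff] at this
      exact this
    -- U ⊆ {f ≠ a} ∪ (msupport μ)ᶜ would be contradictory unless some point works
    have : ∃ x' ∈ U ∩ msupport μ, f x' = a := by
      by_contra hno
      push_neg at hno
      have hsub : U ⊆ {x | f x ≠ a} ∪ (msupport μ)ᶜ := by
        intro z hz
        by_cases hzs : z ∈ msupport μ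
        · exact Or.inl (hno z ⟨hz, hzs⟩)
        · exact Or.inr hzs
      exact hμU (le_antisymm ((measure_mono hsub).trans
        (le_of_eq (by rw [MeasureTheory.measure_union_null hNa hμcompl]))) zero_le)
    obtain ⟨x', hx', hfx'⟩ := this
    have := hUsub ⟨hx'.1, hx'.2⟩
    rw [Set.mem_preimage, Metric.mem_ball, Real.dist_eq, hfx', abs_sub_comm] at this
    exact absurd this (lt_irrefl _)
  -- support of μ is nonempty
  have hne : (msupport μ).Nonempty := by
    by_contra h
    rw [Set.not_nonempty_iff_eq_empty] at h
    have : μ Set.univ = 0 := by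
      have : (msupport μ)ᶜ = Set.univ := by rw [h, Set.compl_empty]
      rw [← this]; exact hμcompl
    simp at this
  obtain ⟨x₀, hx₀⟩ := hne
  set g : Y → ℝ := fun y => sInf ((fun x' => c x' y) '' msupport μ) with hgdef
  have himne : ∀ y : Y, ((fun x' => c x' y) '' msupport μ).Nonempty :=
    fun y => ⟨c x₀ y, x₀, hx₀, rfl⟩
  have hbdd : ∀ y : Y, BddBelow ((fun x' => c x' y) '' msupport μ) := by
    intro y
    exact ⟨0, by rintro b ⟨x, hx, rfl⟩; exact hc0 x y⟩
  have hgle : ∀ y : Y, ∀ x ∈ msupport μ, g y ≤ c x y :=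
    fun y x hx => csInf_le (hbdd y) ⟨x, hx, rfl⟩
  have hg0 : ∀ y, 0 ≤ g y := by
    intro y
    refine le_csInf (himne y) ?_
    rintro b ⟨x, hx, rfl⟩; exact hc0 x y
  have hgC : ∀ y, g y ≤ C := fun y => (hgle y x₀ hx₀).trans (hcC x₀ y)
  -- fc = g - a
  have hfceq : ∀ y, fc y = g y - a := by
    intro y
    rw [hfc y]
    have himg : (fun x => c x y - f x) '' msupport μ
        = (fun t => t - a) '' ((fun x' => c x' y) '' msupport μ) := by
      rw [Set.image_image]
      apply Set.image_congr
      intro x hx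
      rw [hfa x hx]
    rw [himg]
    have hTbdd : BddBelow ((fun t => t - a) '' ((fun x' => c x' y) '' msupport μ)) := by
      refine ⟨-a, ?_⟩
      rintro b ⟨s, ⟨x, hx, rfl⟩, rfl⟩
      have := hc0 x y
      simp only
      linarith
    apply le_antisymm
    · rw [le_sub_iff_add_le]
      refine le_csInf (himne y) ?_
      rintro t ht
      have h' : sInf ((fun t => t - a) '' ((fun x' => c x' y) '' msupport μ)) ≤ t - a :=
        csInf_le hTbdd ⟨t, ht, rfl⟩
      linarith
    · refine le_csInf ((himne y).image _) ?_
      rintro b ⟨t, ht, rfl⟩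
      have := csInf_le (hbdd y) ht
      show g y - a ≤ t - a
      linarith
  -- upper semicontinuity of g
  have husc : ∀ (y : Y) (ε : ℝ), 0 < ε → ∃ V : Set Y, IsOpen V ∧ y ∈ V ∧
      ∀ y' ∈ V, g y' < g y + ε := by
    intro y ε hε
    obtain ⟨b, ⟨x₁, hx₁, rfl⟩, hb⟩ :=
      exists_lt_of_csInf_lt (himne y) (lt_add_of_pos_right (g y) hε)
    have hcx₁ : Continuous fun y' => c x₁ y' := by
      have : (fun y' => c x₁ y') = (fun p : X × Y => c p.1 p.2) ∘ (fun y' => (x₁, y')) := rfl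
      rw [this]
      exact hc.comp (Continuous.prodMk_right x₁)
    refine ⟨{y' | c x₁ y' < g y + ε}, isOpen_lt hcx₁ continuous_const, hb, ?_⟩
    intro y' hy'
    exact lt_of_le_of_lt (hgle y' x₁ hx₁) hy'
  -- measurability of g
  have hgm : Measurable g := by
    apply measurable_of_Iio
    intro t
    have hset : g ⁻¹' Set.Iio t = ⋃ x ∈ msupport μ, {y | c x y < t} := by
      ext y
      simp only [Set.mem_preimage, Set.mem_Iio, Set.mem_iUnion, Set.mem_setOf_eq]
      rw [show g y < t ↔ ∃ b ∈ (fun x' => c x' y) '' msupport μ, b < t from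
        csInf_lt_iff (hbdd y) (himne y)]
      constructor
      · rintro ⟨b, ⟨x, hx, rfl⟩, hb⟩; exact ⟨x, hx, hb⟩
      · rintro ⟨x, hx, hb⟩; exact ⟨c x y, ⟨x, hx, rfl⟩, hb⟩
    rw [hset]
    refine (isOpen_biUnion fun x _ => ?_).measurableSet
    have hcx : Continuous fun y' => c x y' := hc.comp (Continuous.prodMk_right x)
    exact isOpen_lt hcx continuous_const
  -- integral computations
  have hCnn : (0:ℝ) ≤ C := le_trans (hc0 x₀ p.2) (hcC x₀ p.2)
  have hfint : ∫ x, f x ∂μ = a := by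
    rw [MeasureTheory.integral_congr_ae hconsta]
    simp
  have hgint : MeasureTheory.Integrable g ν := by
    refine ⟨hgm.aestronglyMeasurable, MeasureTheory.HasFiniteIntegral.of_bounded
      (C := C) (Filter.Eventually.of_forall fun y => ?_)⟩
    rw [Real.norm_eq_abs, abs_of_nonneg (hg0 y)]
    exact hgC y
  have hfcint : ∫ y, fc y ∂ν = (∫ y, g y ∂ν) - a := by
    rw [show (fun y => fc y) = fun y => g y - a from funext hfceq]
    rw [MeasureTheory.integral_sub hgint (MeasureTheory.integrable_const a)]
    simp
  have hgOT : ∫ y, g y ∂ν = OTr c μ ν := by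
    rw [hfint, hfcint] at hopt
    linarith
  -- the function h := c - g ∘ snd integrates to 0 and is a.e. nonneg
  have hcint : MeasureTheory.Integrable (fun p : X × Y => c p.1 p.2) π := by
    refine ⟨hc.aestronglyMeasurable, MeasureTheory.HasFiniteIntegral.of_bounded
      (C := C) (Filter.Eventually.of_forall fun q => ?_)⟩
    rw [Real.norm_eq_abs, abs_of_nonneg (hc0 q.1 q.2)]
    exact hcC q.1 q.2
  have hgsint : MeasureTheory.Integrable (fun q : X × Y => g q.2) π := by
    refine ⟨(hgm.comp measurable_snd).aestronglyMeasurable,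
      MeasureTheory.HasFiniteIntegral.of_bounded
      (C := C) (Filter.Eventually.of_forall fun q => ?_)⟩
    rw [Real.norm_eq_abs, abs_of_nonneg (hg0 q.2)]
    exact hgC q.2
  have hgmap : ∫ q : X × Y, g q.2 ∂π = ∫ y, g y ∂ν := by
    rw [← hsnd, MeasureTheory.integral_map measurable_snd.aemeasurable
      hgm.aestronglyMeasurable]
  have hhzero : ∫ q : X × Y, (c q.1 q.2 - g q.2) ∂π = 0 := by
    rw [MeasureTheory.integral_sub hcint hgsint, hπopt, hgmap, hgOT, sub_self]
  have haesupp : ∀ᵐ q : X × Y ∂π, q.1 ∈ msupport μ := by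
    have hmeas : MeasurableSet (msupport μ) := (isClosed_msupport μ).measurableSet
    have : π (Prod.fst ⁻¹' (msupport μ)ᶜ) = 0 := by
      rw [← MeasureTheory.Measure.map_apply measurable_fst hmeas.compl, hfst]
      exact hμcompl
    rw [MeasureTheory.ae_iff]
    exact this
  have haenn : 0 ≤ᵐ[π] fun q : X × Y => c q.1 q.2 - g q.2 := by
    filter_upwards [haesupp] with q hq
    simp only [Pi.zero_apply]
    linarith [hgle q.2 q.1 hq]
  have haeeq : (fun q : X × Y => c q.1 q.2 - g q.2) =ᵐ[π] 0 :=
    (MeasureTheory.integral_eq_zero_iff_of_nonneg_ae haenn (hcint.sub hgsint)).mp hhzero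
  have hnull : π {q : X × Y | c q.1 q.2 - g q.2 ≠ 0} = 0 := by
    have := haeeq
    rw [Filter.EventuallyEq, MeasureTheory.ae_iff] at this
    exact this
  -- p.1 is in the support of μ
  have hp1 : p.1 ∈ msupport μ := by
    intro U hU hpU
    have hopen : IsOpen (U ×ˢ (Set.univ : Set Y)) := hU.prod isOpen_univ
    have hpmem : p ∈ U ×ˢ (Set.univ : Set Y) := ⟨hpU, Set.mem_univ _⟩
    have hπpos := hp _ hopen hpmem
    intro hμU0
    apply hπpos
    have : U ×ˢ (Set.univ : Set Y) = Prod.fst ⁻¹' U := by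
      ext q; simp
    rw [this, ← MeasureTheory.Measure.map_apply measurable_fst hU.measurableSet, hfst]
    exact hμU0
  -- conclude
  have hle : g p.2 ≤ c p.1 p.2 := hgle p.2 p.1 hp1
  rcases eq_or_lt_of_le hle with heq | hlt
  · exact heq.symm
  · exfalso
    set ε := (c p.1 p.2 - g p.2) / 3 with hεdef
    have hε : 0 < ε := by rw [hεdef]; linarith
    obtain ⟨V, hVopen, hpV, hVbound⟩ := husc p.2 ε hε
    have hAopen : IsOpen {q : X × Y | c p.1 p.2 - ε < c q.1 q.2} :=
      isOpen_lt continuous_const hc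
    have hpA : p ∈ {q : X × Y | c p.1 p.2 - ε < c q.1 q.2} := by
      simp only [Set.mem_setOf_eq]; linarith
    set W := {q : X × Y | c p.1 p.2 - ε < c q.1 q.2} ∩ (Set.univ ×ˢ V) with hWdef
    have hWopen : IsOpen W := hAopen.inter (isOpen_univ.prod hVopen)
    have hpW : p ∈ W := ⟨hpA, Set.mem_univ _, hpV⟩
    have hWsub : W ⊆ {q : X × Y | c q.1 q.2 - g q.2 ≠ 0} := by
      rintro q ⟨hq1, -, hq2⟩
      have h1 : c p.1 p.2 - ε < c q.1 q.2 := hq1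
      have h2 : g q.2 < g p.2 + ε := hVbound q.2 hq2
      simp only [Set.mem_setOf_eq]
      intro habs
      rw [hεdef] at h1 h2
      linarith
    exact hp W hWopen hpW (le_antisymm ((measure_mono hWsub).trans hnull.le) zero_le)
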